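/- The inequality Rg > Rf, where Rg = Nγ2(β1−γ1)/(β1(σ2+εγ2)) and Rf = N(β2γ1 − β1γ2)/(β2β1(1−ε)), is equivalent (when β2γ1 > β1γ2, β1 > γ1, and 0 ≤ ε < 1) to β1/γ1 > (β2/γ2)·(γ2+σ2)/((1−ε)β2 + εγ2 + σ2), i.e., to R12 > 1. -/
import Mathlib


theorem Rg_gt_Rf_iff_R12_gt_one
    (N β1 β2 γ1 γ2 σ2 ε : ℝ)
    (hN : 0 < N) (hβ1 : 0 < β1) (hβ2 : 0 < β2) (hγ1 : 0 < γ1) (hγ2 : 0 < γ2)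
    (hσ2 : 0 < σ2) (hβ1γ1 : β1 > γ1) (hcross : β2 * γ1 > β1 * γ2)
    (hε0 : 0 ≤ ε) (hε1 : ε < 1) :
    N * γ2 * (β1 - γ1) / (β1 * (σ2 + ε * γ2)) >
      N * (β2 * γ1 - β1 * γ2) / (β2 * β1 * (1 - ε)) ↔
    β1 / γ1 > (β2 / γ2) * ((γ2 + σ2) / ((1 - ε) * β2 + ε * γ2 + σ2)) := by
  have h1 : (0:ℝ) < β1 * (σ2 + ε * γ2) := by nlinarith [mul_nonneg hε0 hγ2.le]
  have h2 : (0:ℝ) < β2 * β1 * (1 - ε) := by nlinarith [mul_pos hβ2 hβ1]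
  have hd : (0:ℝ) < (1 - ε) * β2 + ε * γ2 + σ2 := by nlinarith
  have h3 : (0:ℝ) < γ2 * ((1 - ε) * β2 + ε * γ2 + σ2) := by positivity
  rw [gt_iff_lt, div_lt_div_iff₀ h2 h1, gt_iff_lt, div_mul_div_comm,
    div_lt_div_iff₀ h3 hγ1]
  constructor <;> intro h <;> nlinarith [mul_pos hN hβ2, mul_pos hβ1 hγ2,
    mul_pos (mul_pos hN hβ2) hβ1, sq_nonneg β1, mul_pos hN hβ1]
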